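/- Let A be a set of at least (n−1)! permutation-matrix models of PERM_n, each assigning between n/3 and 2n/3 of its true entries to variables in Y, for a fixed subset Y of the variables. Then any rectangle cover of PERM_n respecting the partition (Y, X∖Y) needs at least (n−1)! / ((⌈n/3⌉)!·(⌊2n/3⌋)!) rectangles to cover A; this quantity is at least (1/n)·binom(n, n/3) ≥ (1/n)·3^{n/3}. -/

import Mathlib

/-- A predicate on assignments depends only on the variables in `S` if its
value is unchanged by modifications outside `S`. -/
def DependsOnVars {V : Type} (r : (V → Bool) → Prop) (S : Set V) : Prop :=
  ∀ a b : V → Bool, (∀ v ∈ S, a v = b v) → (r a ↔ r b)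

/-- The permutation matrix assignment associated to a permutation π. -/
def permMat {n : ℕ} (π : Equiv.Perm (Fin n)) : Fin n × Fin n → Bool :=
  fun p => decide (π p.1 = p.2)

/-- I(π) for a subset Y of the variables: the rows i whose true entry
x_{i,π(i)} lies in Y. -/
def rowsInY {n : ℕ} (Y : Finset (Fin n × Fin n)) (π : Equiv.Perm (Fin n)) :
    Finset (Fin n) :=
  Finset.univ.filter fun i => (i, π i) ∈ Y

/-- Monotonicity of binomial coefficients below the middle. -/
lemma aux_choose_mono {n a b : ℕ} (hab : a ≤ b) (hb : b ≤ n / 2) :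
    n.choose a ≤ n.choose b := by
  obtain ⟨d, rfl⟩ := Nat.exists_eq_add_of_le hab
  clear hab
  induction d with
  | zero => simp
  | succ d ih =>
    have h1 : a + d < n / 2 := by omega
    calc n.choose a ≤ n.choose (a + d) := ih (by omega)
      _ ≤ n.choose (a + d + 1) := Nat.choose_le_succ_of_lt_half_left h1

/-- `3^m ≤ C(n, m)` whenever `3m ≤ n`. -/
lemma aux_pow3_le_choose : ∀ m n : ℕ, 3 * m ≤ n → 3 ^ m ≤ n.choose m := by
  intro m
  induction m with
  | zero => intro n _; simp
  | succ m ih =>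
    intro n hn
    obtain ⟨n', rfl⟩ : ∃ n', n = n' + 1 := ⟨n - 1, by omega⟩
    have h1 : 3 ^ m ≤ n'.choose m := ih n' (by omega)
    have h2 : (n' + 1) * n'.choose m = (n' + 1).choose (m + 1) * (m + 1) :=
      Nat.add_one_mul_choose_eq n' m
    have h3 : 3 ^ (m + 1) * (m + 1) ≤ (n' + 1).choose (m + 1) * (m + 1) := by
      calc 3 ^ (m + 1) * (m + 1) = 3 ^ m * (3 * (m + 1)) := by ring
        _ ≤ n'.choose m * (3 * (m + 1)) := Nat.mul_le_mul_right _ h1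
        _ ≤ n'.choose m * (n' + 1) := Nat.mul_le_mul_left _ (by omega)
        _ = (n' + 1).choose (m + 1) * (m + 1) := by rw [Nat.mul_comm]; exact h2
    exact Nat.le_of_mul_le_mul_right h3 (by omega)

/-- `k!(n-k)! ≤ a!(n-a)!` when `a ≤ k ≤ n - a` and `a ≤ n/2`. -/
lemma aux_fac_bound {n a k : ℕ} (ha : a ≤ n / 2) (hak : a ≤ k) (hka : k ≤ n - a) :
    Nat.factorial k * Nat.factorial (n - k) ≤
      Nat.factorial a * Nat.factorial (n - a) := by
  have hkn : k ≤ n := by omega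
  have han : a ≤ n := by omega
  have hch : n.choose a ≤ n.choose k := by
    rcases le_or_gt k (n / 2) with h | h
    · exact aux_choose_mono hak h
    · have hnk : n - k ≤ n / 2 := by omega
      have : n.choose a ≤ n.choose (n - k) := aux_choose_mono (by omega) hnk
      rwa [Nat.choose_symm hkn] at this
  have e1 : n.choose k * Nat.factorial k * Nat.factorial (n - k) = Nat.factorial n :=
    Nat.choose_mul_factorial_mul_factorial hkn
  have e2 : n.choose a * Nat.factorial a * Nat.factorial (n - a) = Nat.factorial n :=
    Nat.choose_mul_factorial_mul_factorial han
  have hpos : 0 < n.choose a := Nat.choose_pos han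
  have : Nat.factorial k * Nat.factorial (n - k) * n.choose a ≤
      Nat.factorial a * Nat.factorial (n - a) * n.choose a := by
    calc Nat.factorial k * Nat.factorial (n - k) * n.choose a
        ≤ Nat.factorial k * Nat.factorial (n - k) * n.choose k :=
          Nat.mul_le_mul_left _ hch
      _ = Nat.factorial n := by rw [← e1]; ring
      _ = Nat.factorial a * Nat.factorial (n - a) * n.choose a := by rw [← e2]; ring
  exact Nat.le_of_mul_le_mul_right this hpos

/-- Mixing two accepted permutation matrices along `Y` yields an accepted
assignment, hence a permutation matrix. -/
lemma aux_rect_facts {n : ℕ} (Y : Finset (Fin n × Fin n))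
    (r1 r2 : (Fin n × Fin n → Bool) → Prop)
    (h1 : DependsOnVars r1 ↑Y) (h2 : DependsOnVars r2 (↑Y : Set (Fin n × Fin n))ᶜ)
    (himp : ∀ a, r1 a ∧ r2 a → ∃ σ : Equiv.Perm (Fin n), a = permMat σ)
    (σ τ : Equiv.Perm (Fin n))
    (hσ : r1 (permMat σ) ∧ r2 (permMat σ))
    (hτ : r1 (permMat τ) ∧ r2 (permMat τ)) :
    rowsInY Y σ ⊆ rowsInY Y τ ∧
      (rowsInY Y σ).image σ ⊆ (rowsInY Y τ).image τ := by
  classical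
  set m : Fin n × Fin n → Bool :=
    fun p => if p ∈ Y then permMat σ p else permMat τ p with hm
  have hr1 : r1 m := by
    refine (h1 (permMat σ) m ?_).mp hσ.1
    intro v hv
    simp only [Finset.mem_coe] at hv
    simp [hm, hv]
  have hr2 : r2 m := by
    refine (h2 (permMat τ) m ?_).mp hτ.2
    intro v hv
    simp only [Set.mem_compl_iff, Finset.mem_coe] at hv
    simp [hm, hv]
  obtain ⟨π, hπ⟩ := himp m ⟨hr1, hr2⟩
  have hmix : ∀ p : Fin n × Fin n,
      (if p ∈ Y then permMat σ p else permMat τ p) = permMat π p := by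
    intro p; rw [← hπ]
  have fact1 : ∀ i : Fin n, (i, σ i) ∈ Y → π i = σ i := by
    intro i h
    have := hmix (i, σ i)
    simp only [permMat, h, if_true] at this
    simpa using this.symm
  have fact2 : ∀ i : Fin n, (i, τ i) ∉ Y → π i = τ i := by
    intro i h
    have := hmix (i, τ i)
    simp only [permMat, h, if_false] at this
    simpa using this.symm
  constructor
  · intro i hi
    rw [rowsInY, Finset.mem_filter] at hi ⊢
    refine ⟨Finset.mem_univ _, ?_⟩
    by_contra h
    have e1 := fact1 i hi.2
    have e2 := fact2 i h
    rw [e1] at e2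
    rw [e2] at hi
    exact h hi.2
  · intro j hj
    rw [Finset.mem_image] at hj
    obtain ⟨i, hi, rfl⟩ := hj
    rw [rowsInY, Finset.mem_filter] at hi
    by_contra hj'
    have hτY : (τ.symm (σ i), τ (τ.symm (σ i))) ∉ Y := by
      intro h
      apply hj'
      rw [Finset.mem_image]
      refine ⟨τ.symm (σ i), ?_, by rw [Equiv.apply_symm_apply]⟩
      rw [rowsInY, Finset.mem_filter]
      exact ⟨Finset.mem_univ _, h⟩
    have e1 := fact1 i hi.2
    have e2 := fact2 _ hτY
    rw [Equiv.apply_symm_apply] at e2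
    have : i = τ.symm (σ i) := π.injective (by rw [e1, e2])
    apply hj'
    rw [Finset.mem_image]
    refine ⟨i, ?_, ?_⟩
    · rw [rowsInY, Finset.mem_filter]
      refine ⟨Finset.mem_univ _, ?_⟩
      have : τ i = σ i := by
        conv_lhs => rw [this]
        rw [Equiv.apply_symm_apply]
      rw [this]
      exact hi.2
    · conv_lhs => rw [this]
      rw [Equiv.apply_symm_apply]

theorem stmt9 (n s : ℕ) (hn : 3 ≤ n) (Y : Finset (Fin n × Fin n))
    (A : Finset (Equiv.Perm (Fin n)))
    (hA : Nat.factorial (n - 1) ≤ A.card)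
    (hbal : ∀ σ ∈ A, n ≤ 3 * (rowsInY Y σ).card ∧ 3 * (rowsInY Y σ).card ≤ 2 * n)
    (r1 r2 : Fin s → (Fin n × Fin n → Bool) → Prop)
    (hdep : ∀ i, DependsOnVars (r1 i) ↑Y ∧
      DependsOnVars (r2 i) (↑Y : Set (Fin n × Fin n))ᶜ)
    (himp : ∀ i a, r1 i a ∧ r2 i a → ∃ σ : Equiv.Perm (Fin n), a = permMat σ)
    (hcov : ∀ σ ∈ A, ∃ i, r1 i (permMat σ) ∧ r2 i (permMat σ)) :
    Nat.factorial (n - 1) ≤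
      s * (Nat.factorial ((n + 2) / 3) * Nat.factorial (2 * n / 3)) ∧
    Nat.choose n ((n + 2) / 3) ≤ n * s ∧
    3 ^ (n / 3) ≤ n * s := by
  classical
  set a : ℕ := (n + 2) / 3 with ha_def
  set M : ℕ := Nat.factorial a * Nat.factorial (2 * n / 3) with hM_def
  have hab : 2 * n / 3 = n - a := by omega
  -- the permutations covered by rectangle i
  set P : Fin s → Finset (Equiv.Perm (Fin n)) :=
    fun i => A.filter (fun σ => r1 i (permMat σ) ∧ r2 i (permMat σ)) with hP
  -- each rectangle covers at most M permutations of A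
  have hbound : ∀ i : Fin s, (P i).card ≤ M := by
    intro i
    rcases Finset.eq_empty_or_nonempty (P i) with h | ⟨σ0, hσ0⟩
    · rw [h]; simp
    · have hσ0' := hσ0
      rw [hP, Finset.mem_filter] at hσ0'
      set I : Finset (Fin n) := rowsInY Y σ0 with hI
      set C : Finset (Fin n) := I.image σ0 with hC
      set k : ℕ := I.card with hk
      have hCcard : C.card = k := by
        rw [hC, Finset.card_image_of_injective _ σ0.injective]
      have hbal0 := hbal σ0 hσ0'.1
      -- every permutation in P i has the same rows and columns in Y
      have key : ∀ σ ∈ P i, rowsInY Y σ = I ∧ (rowsInY Y σ).image σ = C := by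
        intro σ hσ
        rw [hP, Finset.mem_filter] at hσ
        have f1 := aux_rect_facts Y (r1 i) (r2 i) (hdep i).1 (hdep i).2
          (himp i) σ σ0 hσ.2 hσ0'.2
        have f2 := aux_rect_facts Y (r1 i) (r2 i) (hdep i).1 (hdep i).2
          (himp i) σ0 σ hσ0'.2 hσ.2
        exact ⟨Finset.Subset.antisymm f1.1 f2.1, Finset.Subset.antisymm f1.2 f2.2⟩
      -- memberships for the counting map
      have memC : ∀ σ ∈ P i, ∀ x : Fin n, x ∈ I → σ x ∈ C := by
        intro σ hσ x hx
        obtain ⟨hrows, himg⟩ := key σ hσ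
        rw [← himg, Finset.mem_image]
        exact ⟨x, by rw [hrows]; exact hx, rfl⟩
      have memCc : ∀ σ ∈ P i, ∀ x : Fin n, x ∉ I → σ x ∉ C := by
        intro σ hσ x hx hmem
        obtain ⟨hrows, himg⟩ := key σ hσ
        rw [← himg, Finset.mem_image] at hmem
        obtain ⟨y, hy, hyx⟩ := hmem
        have : y = x := σ.injective hyx
        rw [this, hrows] at hy
        exact hx hy
      -- fallback embeddings built from σ0
      have memC0 : ∀ x : Fin n, x ∈ I → σ0 x ∈ C := memC σ0 hσ0
      have memCc0 : ∀ x : Fin n, x ∉ I → σ0 x ∉ C := memCc σ0 hσ0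
      let e0 : (↥I ↪ ↥C) × (↥(Iᶜ) ↪ ↥(Cᶜ)) :=
        (⟨fun x => ⟨σ0 x.1, memC0 x.1 x.2⟩,
          fun x y h => Subtype.ext (σ0.injective (congrArg Subtype.val h))⟩,
         ⟨fun x => ⟨σ0 x.1, Finset.mem_compl.mpr
            (memCc0 x.1 (Finset.mem_compl.mp x.2))⟩,
          fun x y h => Subtype.ext (σ0.injective (congrArg Subtype.val h))⟩)
      -- the injective counting map
      let f : Equiv.Perm (Fin n) → (↥I ↪ ↥C) × (↥(Iᶜ) ↪ ↥(Cᶜ)) :=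
        fun σ => if h : σ ∈ P i then
          (⟨fun x => ⟨σ x.1, memC σ h x.1 x.2⟩,
            fun x y hxy => Subtype.ext (σ.injective (congrArg Subtype.val hxy))⟩,
           ⟨fun x => ⟨σ x.1, Finset.mem_compl.mpr
              (memCc σ h x.1 (Finset.mem_compl.mp x.2))⟩,
            fun x y hxy => Subtype.ext (σ.injective (congrArg Subtype.val hxy))⟩)
          else e0
      have hinj : Set.InjOn f (P i) := by
        intro σ hσ τ hτ hfeq
        simp only [Finset.mem_coe] at hσ hτ
        simp only [f, dif_pos hσ, dif_pos hτ, Prod.mk.injEq] at hfeq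
        apply Equiv.ext
        intro x
        by_cases hx : x ∈ I
        · have := congrFun (congrArg (fun (e : ↥I ↪ ↥C) => (e : ↥I → ↥C)) hfeq.1) ⟨x, hx⟩
          exact congrArg Subtype.val this
        · have hx' : x ∈ Iᶜ := Finset.mem_compl.mpr hx
          have := congrFun (congrArg (fun (e : ↥(Iᶜ) ↪ ↥(Cᶜ)) => (e : ↥(Iᶜ) → ↥(Cᶜ))) hfeq.2)
            ⟨x, hx'⟩
          exact congrArg Subtype.val this
      have hcard : (P i).card ≤ Fintype.card ((↥I ↪ ↥C) × (↥(Iᶜ) ↪ ↥(Cᶜ))) := by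
        have := Finset.card_le_card_of_injOn f
          (fun σ _ => Finset.mem_univ (f σ)) hinj
        simpa using this
      have hcard2 : Fintype.card ((↥I ↪ ↥C) × (↥(Iᶜ) ↪ ↥(Cᶜ))) =
          Nat.factorial k * Nat.factorial (n - k) := by
        rw [Fintype.card_prod, Fintype.card_embedding_eq, Fintype.card_embedding_eq]
        simp only [Fintype.card_coe]
        rw [hCcard, ← hk, Finset.card_compl, Finset.card_compl, hCcard, ← hk,
          Fintype.card_fin, Nat.descFactorial_self, Nat.descFactorial_self]
      have hkn : k ≤ n := by
        calc k = I.card := rfl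
          _ ≤ (Finset.univ : Finset (Fin n)).card := Finset.card_le_card (Finset.subset_univ I)
          _ = n := by simp
      have hk2 : k = (rowsInY Y σ0).card := rfl
      have hfin : Nat.factorial k * Nat.factorial (n - k) ≤ M := by
        rw [hM_def, hab]
        exact aux_fac_bound (by omega) (by omega) (by omega)
      omega
  -- the cover bound
  have hAsub : A ⊆ Finset.univ.biUnion P := by
    intro σ hσ
    obtain ⟨i, hi⟩ := hcov σ hσ
    rw [Finset.mem_biUnion]
    exact ⟨i, Finset.mem_univ i, by rw [hP, Finset.mem_filter]; exact ⟨hσ, hi⟩⟩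
  have hAcard : A.card ≤ s * M := by
    calc A.card ≤ (Finset.univ.biUnion P).card := Finset.card_le_card hAsub
      _ ≤ ∑ i : Fin s, (P i).card := Finset.card_biUnion_le
      _ ≤ ∑ _i : Fin s, M := Finset.sum_le_sum (fun i _ => hbound i)
      _ = s * M := by simp [Finset.sum_const, Finset.card_univ]
  have main1 : Nat.factorial (n - 1) ≤ s * M := le_trans hA hAcard
  -- derive the choose bound
  have han : a ≤ n := by omega
  have hfaceq : n.choose a * (Nat.factorial a * Nat.factorial (n - a)) = Nat.factorial n := by
    rw [← Nat.choose_mul_factorial_mul_factorial han]; ring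
  have hnfac : n * Nat.factorial (n - 1) = Nat.factorial n := by
    have : n = (n - 1) + 1 := by omega
    rw [this, Nat.factorial_succ]
    simp
  have main2 : n.choose a ≤ n * s := by
    have h1 : Nat.factorial n ≤ n * (s * M) := by
      rw [← hnfac]
      exact Nat.mul_le_mul_left n main1
    rw [← hfaceq] at h1
    rw [hM_def, hab] at h1
    have hpos : 0 < Nat.factorial a * Nat.factorial (n - a) :=
      Nat.mul_pos (Nat.factorial_pos a) (Nat.factorial_pos (n - a))
    have h2 : n.choose a * (Nat.factorial a * Nat.factorial (n - a)) ≤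
        (n * s) * (Nat.factorial a * Nat.factorial (n - a)) := by
      calc n.choose a * (Nat.factorial a * Nat.factorial (n - a)) ≤
          n * (s * (Nat.factorial a * Nat.factorial (n - a))) := h1
        _ = (n * s) * (Nat.factorial a * Nat.factorial (n - a)) := by ring
    exact Nat.le_of_mul_le_mul_right h2 hpos
  refine ⟨main1, main2, ?_⟩
  -- the power bound
  have h3 : 3 ^ (n / 3) ≤ n.choose (n / 3) := aux_pow3_le_choose (n / 3) n (by omega)
  have h4 : n.choose (n / 3) ≤ n.choose a := aux_choose_mono (by omega) (by omega)
  omega
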